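/- With u_k* as above (iterated convolutions of a potential density u satisfying u(t) ≤ C₂ t^{β−1}, U(t) ≤ C₁ t^β on [0,T], β ∈ (0,1)), for every λ > 0 the series Σ_{k=0}^∞ λ^k u_k*(t) converges uniformly (normally) on [0,T], with Σ_{k=0}^∞ λ^k u_k*(t) ≤ 1 + (C₁β/C₂)(E_β(λ C₂ Γ(β) t^β) − 1), where E_β(z) = Σ_{k≥0} z^k/Γ(βk+1) is the Mittag-Leffler function. -/

import Mathlib

open Set MeasureTheory Real Filter


lemma gamma_slope {β x : ℝ} (hβ : 0 < β) (hx : 1 < x) :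
    Real.Gamma x * (x - 1) ^ β ≤ Real.Gamma (x + β) := by
  have h0 : (0:ℝ) < x - 1 := by linarith
  have hx0 : (0:ℝ) < x := by linarith
  have hsl := Real.convexOn_log_Gamma.slope_mono_adjacent
    (x := x - 1) (y := x) (z := x + β)
    (by simp [Set.mem_Ioi]; linarith) (by simp [Set.mem_Ioi]; linarith)
    (by linarith) (by linarith)
  have hGx : Real.Gamma x = (x - 1) * Real.Gamma (x - 1) := by
    have := Real.Gamma_add_one (by linarith : x - 1 ≠ 0)
    calc Real.Gamma x = Real.Gamma (x - 1 + 1) := by ring_nf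
      _ = (x - 1) * Real.Gamma (x - 1) := this
  have hG1 : 0 < Real.Gamma (x - 1) := Real.Gamma_pos_of_pos h0
  have hGxp : 0 < Real.Gamma x := Real.Gamma_pos_of_pos hx0
  have hGxb : 0 < Real.Gamma (x + β) := Real.Gamma_pos_of_pos (by linarith)
  simp only [Function.comp] at hsl
  have e1 : Real.log (Real.Gamma x) - Real.log (Real.Gamma (x - 1)) = Real.log (x - 1) := by
    rw [hGx, Real.log_mul (by positivity) (by positivity)]; ring
  rw [show x - (x - 1) = 1 by ring, show x + β - x = β by ring, div_one, e1] at hsl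
  have key : β * Real.log (x - 1) + Real.log (Real.Gamma x) ≤ Real.log (Real.Gamma (x + β)) := by
    rw [le_div_iff₀ hβ] at hsl; nlinarith
  calc Real.Gamma x * (x - 1) ^ β
      = Real.exp (Real.log (Real.Gamma x) + β * Real.log (x - 1)) := by
        rw [Real.exp_add, Real.exp_log hGxp, Real.rpow_def_of_pos h0]; ring_nf
    _ ≤ Real.exp (Real.log (Real.Gamma (x + β))) := by
        apply Real.exp_le_exp.mpr; linarith
    _ = Real.Gamma (x + β) := Real.exp_log hGxb


lemma beta_eval {p q t : ℝ} (hp : 0 < p) (hq : 0 < q) (ht : 0 < t) :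
    ∫ s in (0:ℝ)..t, s ^ (p - 1) * (t - s) ^ (q - 1) =
      Real.Gamma p * Real.Gamma q / Real.Gamma (p + q) * t ^ (p + q - 1) := by
  have hGpq : (0:ℝ) < Real.Gamma (p + q) := Real.Gamma_pos_of_pos (by linarith)
  have hbeta : Complex.betaIntegral p q =
      ((Real.Gamma p * Real.Gamma q / Real.Gamma (p + q) : ℝ) : ℂ) := by
    have h := Complex.Gamma_mul_Gamma_eq_betaIntegral
      (s := (p:ℂ)) (t := (q:ℂ)) (by simpa using hp) (by simpa using hq)
    have hpq : ((p:ℂ) + (q:ℂ)) = ((p + q : ℝ) : ℂ) := by push_cast; ring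
    rw [hpq, Complex.Gamma_ofReal, Complex.Gamma_ofReal, Complex.Gamma_ofReal] at h
    have hne : ((Real.Gamma (p + q) : ℝ) : ℂ) ≠ 0 := by
      simpa using hGpq.ne'
    push_cast
    rw [eq_div_iff hne, mul_comm] at *
    linear_combination h.symm
  have hscaled := Complex.betaIntegral_scaled (p:ℂ) (q:ℂ) ht
  have hlhs : (∫ x in (0:ℝ)..t, (x:ℂ) ^ ((p:ℂ) - 1) * ((t:ℂ) - (x:ℂ)) ^ ((q:ℂ) - 1)) =
      ((∫ s in (0:ℝ)..t, s ^ (p - 1) * (t - s) ^ (q - 1) : ℝ) : ℂ) := by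
    rw [← intervalIntegral.integral_ofReal]
    rw [intervalIntegral.integral_of_le ht.le, intervalIntegral.integral_of_le ht.le]
    refine setIntegral_congr_fun measurableSet_Ioc fun x hx => ?_
    rw [Complex.ofReal_mul, Complex.ofReal_cpow hx.1.le, Complex.ofReal_cpow
      (sub_nonneg.mpr hx.2)]
    push_cast; ring
  have hrhs : ((t:ℂ)) ^ ((p:ℂ) + (q:ℂ) - 1) = ((t ^ (p + q - 1) : ℝ) : ℂ) := by
    rw [Complex.ofReal_cpow ht.le]; push_cast; ring_nf
  rw [hlhs, hbeta, hrhs] at hscaled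
  rw [← Complex.ofReal_mul] at hscaled
  have : (∫ s in (0:ℝ)..t, s ^ (p - 1) * (t - s) ^ (q - 1)) =
      t ^ (p + q - 1) * (Real.Gamma p * Real.Gamma q / Real.Gamma (p + q)) := by
    exact_mod_cast hscaled
  rw [this]; ring


lemma integ_aux {β γ t : ℝ} (hb : 0 < β) (hγ : 0 ≤ γ) :
    IntervalIntegrable (fun s => (t - s) ^ (β - 1) * s ^ γ) volume 0 t := by
  have h1 : IntervalIntegrable (fun s : ℝ => (t - s) ^ (β - 1)) volume 0 t := by
    have := (intervalIntegral.intervalIntegrable_rpow' (a := 0) (b := t)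
      (r := β - 1) (by linarith)).comp_sub_left t
    simpa using this.symm
  exact h1.mul_continuousOn ((Real.continuous_rpow_const hγ).continuousOn)

lemma ae_Icc_of_Ioo {a b : ℝ} {p : ℝ → Prop} (h : ∀ x ∈ Ioo a b, p x) :
    ∀ᵐ x ∂(volume.restrict (Icc a b)), p x := by
  rw [← Measure.restrict_congr_set Ioo_ae_eq_Icc]
  exact (ae_restrict_iff' measurableSet_Ioo).mpr (Filter.Eventually.of_forall h)

lemma main_bound (u : ℝ → ℝ) (v : ℕ → ℝ → ℝ) (C₁ C₂ β T : ℝ)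
    (hβ : β ∈ Set.Ioo (0:ℝ) 1) (hC₁ : 0 < C₁) (hC₂ : 0 < C₂) (hT : 0 < T)
    (hu0 : ∀ t ∈ Set.Ioc (0:ℝ) T, 0 ≤ u t)
    (hub : ∀ t ∈ Set.Ioc (0:ℝ) T, u t ≤ C₂ * t ^ (β - 1))
    (hU : ∀ t ∈ Set.Icc (0:ℝ) T, (∫ s in (0:ℝ)..t, u s) ≤ C₁ * t ^ β)
    (hv0 : ∀ t : ℝ, v 0 t = 1)
    (hvs : ∀ (k : ℕ) (t : ℝ), v (k + 1) t = ∫ s in (0:ℝ)..t, u (t - s) * v k s) :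
    ∀ k : ℕ, ∀ t ∈ Set.Icc (0:ℝ) T, 0 ≤ v (k+1) t ∧
      v (k+1) t ≤ (C₁ * β / C₂) * (C₂ * Real.Gamma β) ^ (k+1) /
        Real.Gamma (β * ((k:ℝ)+1) + 1) * t ^ (β * ((k:ℝ)+1)) := by
  obtain ⟨hβ0, hβ1⟩ := hβ
  have hΓβ : 0 < Real.Gamma β := Real.Gamma_pos_of_pos hβ0
  -- nonnegativity of every v (k+1), given nonneg of v k on Icc 0 T
  have hnonneg : ∀ k : ℕ, (∀ s ∈ Set.Icc (0:ℝ) T, 0 ≤ v k s) →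
      ∀ t ∈ Set.Icc (0:ℝ) T, 0 ≤ v (k+1) t := by
    intro k hk t ht
    rw [hvs]
    apply intervalIntegral.integral_nonneg_of_ae_restrict ht.1
    apply ae_Icc_of_Ioo
    intro s hs
    have h1 : 0 ≤ u (t - s) := hu0 _ ⟨by linarith [hs.2], by linarith [ht.2, hs.1]⟩
    have h2 : 0 ≤ v k s := hk s ⟨hs.1.le, le_trans hs.2.le ht.2⟩
    positivity
  intro k
  induction k with
  | zero =>
    intro t ht
    have hnn : ∀ s ∈ Set.Icc (0:ℝ) T, 0 ≤ v 0 s := fun s _ => by rw [hv0]; norm_num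
    refine ⟨hnonneg 0 hnn t ht, ?_⟩
    have hveq : v 1 t = ∫ s in (0:ℝ)..t, u (t - s) := by
      rw [hvs]; simp only [hv0, mul_one]
    have hrefl : (∫ s in (0:ℝ)..t, u (t - s)) = ∫ s in (0:ℝ)..t, u s := by
      simpa using intervalIntegral.integral_comp_sub_left u t
    have hC : (C₁ * β / C₂) * (C₂ * Real.Gamma β) ^ 1 /
        Real.Gamma (β + 1) = C₁ := by
      rw [Real.Gamma_add_one hβ0.ne']; field_simp
    simp only [Nat.cast_zero, zero_add, mul_one] at *
    rw [hveq, hrefl, hC]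
    exact hU t ht
  | succ n ih =>
    intro t ht
    set γ : ℝ := β * ((n:ℝ)+1) with hγdef
    have hγ0 : 0 < γ := by positivity
    set D : ℝ := (C₁ * β / C₂) * (C₂ * Real.Gamma β) ^ (n+1) / Real.Gamma (γ + 1) with hDdef
    have hΓγ : 0 < Real.Gamma (γ + 1) := Real.Gamma_pos_of_pos (by linarith)
    have hΓγβ : 0 < Real.Gamma (γ + 1 + β) := Real.Gamma_pos_of_pos (by linarith)
    have hD : 0 ≤ D := by positivity
    have hexp : β * ((((n:ℕ)+1 : ℕ):ℝ) + 1) = γ + β := by push_cast; ring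
    refine ⟨hnonneg (n+1) (fun s hs => (ih s hs).1) t ht, ?_⟩
    have hRHS : (C₁ * β / C₂) * (C₂ * Real.Gamma β) ^ (n+1+1) /
        Real.Gamma (β * ((((n:ℕ)+1 : ℕ):ℝ) + 1) + 1) * t ^ (β * ((((n:ℕ)+1 : ℕ):ℝ) + 1))
        = C₂ * D * (Real.Gamma (γ + 1) * Real.Gamma β / Real.Gamma (γ + 1 + β)
            * t ^ (γ + β)) := by
      rw [hexp, hDdef, show γ + β + 1 = γ + 1 + β by ring]
      field_simp
      ring
    rw [hRHS]
    rcases eq_or_lt_of_le ht.1 with h0 | h0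
    · rw [hvs, ← h0, intervalIntegral.integral_same,
        Real.zero_rpow (by positivity : (0:ℝ) < γ + β).ne']
      simp
    · by_cases hint : IntervalIntegrable (fun s => u (t - s) * v (n+1) s) volume 0 t
      · have hg : IntervalIntegrable
            (fun s => (C₂ * D) * ((t-s)^(β-1) * s^γ)) volume 0 t :=
          (integ_aux hβ0 hγ0.le).const_mul _
        have hle : v (n+1+1) t ≤ ∫ s in (0:ℝ)..t, (C₂*D) * ((t-s)^(β-1) * s^γ) := by
          rw [hvs]
          apply intervalIntegral.integral_mono_ae_restrict ht.1 hint hg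
          apply ae_Icc_of_Ioo; intro s hs
          have hsIcc : s ∈ Set.Icc (0:ℝ) T := ⟨hs.1.le, hs.2.le.trans ht.2⟩
          have h1 : 0 ≤ v (n+1) s := (ih s hsIcc).1
          have h2 : v (n+1) s ≤ D * s ^ γ := (ih s hsIcc).2
          have h3 : u (t-s) ≤ C₂ * (t-s)^(β-1) :=
            hub _ ⟨by linarith [hs.2], by linarith [ht.2, hs.1]⟩
          have h5 : (0:ℝ) ≤ C₂ * (t-s)^(β-1) :=
            mul_nonneg hC₂.le (Real.rpow_nonneg (by linarith [hs.2]) _)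
          calc u (t-s) * v (n+1) s ≤ (C₂ * (t-s)^(β-1)) * (D * s^γ) :=
                mul_le_mul h3 h2 h1 h5
            _ = (C₂*D) * ((t-s)^(β-1) * s^γ) := by ring
        have hbe := beta_eval (p := γ + 1) (q := β) (by linarith) hβ0 h0
        have hInt : (∫ s in (0:ℝ)..t, (C₂*D) * ((t-s)^(β-1) * s^γ))
            = C₂ * D * (Real.Gamma (γ + 1) * Real.Gamma β / Real.Gamma (γ + 1 + β)
              * t ^ (γ + β)) := by
          rw [intervalIntegral.integral_const_mul]
          congr 1
          rw [show γ + 1 + β - 1 = γ + β by ring] at hbe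
          rw [← hbe]
          apply intervalIntegral.integral_congr
          intro s _
          rw [show γ + 1 - 1 = γ by ring]
          ring
        rw [hInt] at hle
        exact hle
      · rw [hvs, intervalIntegral.integral_undef hint]
        positivity

lemma ML_summable {β : ℝ} (hβ0 : 0 < β) {Z : ℝ} (hZ : 0 ≤ Z) :
    Summable (fun k : ℕ => Z ^ k / Real.Gamma (β * (k:ℝ) + 1)) := by
  apply summable_of_ratio_norm_eventually_le (r := 1/2) (by norm_num)
  have htend : Tendsto (fun k : ℕ => (β * (k:ℝ)) ^ β) atTop atTop :=
    (tendsto_rpow_atTop hβ0).comp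
      (Filter.Tendsto.const_mul_atTop hβ0 tendsto_natCast_atTop_atTop)
  filter_upwards [htend.eventually_ge_atTop (2*Z), Filter.eventually_ge_atTop 1]
    with k hk hk1
  have hβk : (0:ℝ) < β * k := by
    have : (1:ℝ) ≤ (k:ℝ) := by exact_mod_cast hk1
    nlinarith
  have hP : (0:ℝ) < (β * (k:ℝ)) ^ β := Real.rpow_pos_of_pos hβk _
  have hG1 : 0 < Real.Gamma (β * (k:ℝ) + 1) := Real.Gamma_pos_of_pos (by linarith)
  have hG2 : 0 < Real.Gamma (β * ((k:ℝ)+1) + 1) := Real.Gamma_pos_of_pos (by nlinarith)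
  have hs := gamma_slope (x := β * (k:ℝ) + 1) hβ0 (by linarith)
  rw [show β * (k:ℝ) + 1 - 1 = β * k by ring] at hs
  rw [show β * (k:ℝ) + 1 + β = β * ((k:ℝ)+1) + 1 by ring] at hs
  have h1 : Z ^ (k+1) ≤ Z ^ k * ((β * (k:ℝ)) ^ β / 2) := by
    rw [pow_succ]
    exact mul_le_mul_of_nonneg_left (by linarith) (pow_nonneg hZ k)
  have h2 : Z ^ (k+1) / Real.Gamma (β * ((k:ℝ)+1) + 1)
      ≤ Z ^ (k+1) / (Real.Gamma (β * (k:ℝ) + 1) * (β * (k:ℝ)) ^ β) :=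
    div_le_div_of_nonneg_left (pow_nonneg hZ _) (by positivity) hs
  have h3 : Z ^ (k+1) / (Real.Gamma (β * (k:ℝ) + 1) * (β * (k:ℝ)) ^ β)
      ≤ 1/2 * (Z ^ k / Real.Gamma (β * (k:ℝ) + 1)) := by
    rw [div_le_iff₀ (by positivity)]
    calc Z ^ (k+1) ≤ Z ^ k * ((β * (k:ℝ)) ^ β / 2) := h1
      _ = 1/2 * (Z ^ k / Real.Gamma (β * (k:ℝ) + 1)) *
          (Real.Gamma (β * (k:ℝ) + 1) * (β * (k:ℝ)) ^ β) := by
        field_simp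
  have hnn1 : 0 ≤ Z ^ (k+1) / Real.Gamma (β * ((k:ℝ)+1) + 1) := by positivity
  have hnn2 : 0 ≤ Z ^ k / Real.Gamma (β * (k:ℝ) + 1) := by positivity
  rw [Real.norm_eq_abs, Real.norm_eq_abs, abs_of_nonneg hnn2]
  rw [abs_of_nonneg (by push_cast; exact_mod_cast hnn1)]
  push_cast
  linarith [h2.trans h3]

/-- Lemma 4.2: normal convergence on `[0,T]` of the series `Σ λ^k u_k^*(t)`,
with a Mittag-Leffler bound. -/
theorem stmt10 (u : ℝ → ℝ) (v : ℕ → ℝ → ℝ) (C₁ C₂ β T : ℝ)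
    (hβ : β ∈ Set.Ioo (0:ℝ) 1) (hC₁ : 0 < C₁) (hC₂ : 0 < C₂) (hT : 0 < T)
    (humeas : Measurable u)
    (hu0 : ∀ t ∈ Set.Ioc (0:ℝ) T, 0 ≤ u t)
    (hub : ∀ t ∈ Set.Ioc (0:ℝ) T, u t ≤ C₂ * t ^ (β - 1))
    (hU : ∀ t ∈ Set.Icc (0:ℝ) T, (∫ s in (0:ℝ)..t, u s) ≤ C₁ * t ^ β)
    (hv0 : ∀ t : ℝ, v 0 t = 1)
    (hvs : ∀ (k : ℕ) (t : ℝ), v (k + 1) t = ∫ s in (0:ℝ)..t, u (t - s) * v k s) :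
    ∀ lam > (0:ℝ),
      (∃ M : ℕ → ℝ, Summable M ∧ ∀ k : ℕ, ∀ t ∈ Set.Icc (0:ℝ) T, |lam ^ k * v k t| ≤ M k)
      ∧ ∀ t ∈ Set.Icc (0:ℝ) T,
          ∑' k : ℕ, lam ^ k * v k t
            ≤ 1 + (C₁ * β / C₂) *
                ((∑' k : ℕ, (lam * C₂ * Real.Gamma β * t ^ β) ^ k /
                    Real.Gamma (β * (k : ℝ) + 1)) - 1) := by
  intro lam hlam
  obtain ⟨hβ0, hβ1⟩ := hβ
  have hΓβ : 0 < Real.Gamma β := Real.Gamma_pos_of_pos hβ0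
  have hMB := main_bound u v C₁ C₂ β T ⟨hβ0, hβ1⟩ hC₁ hC₂ hT hu0 hub hU hv0 hvs
  have hΓpos : ∀ n : ℕ, 0 < Real.Gamma (β * ((n:ℝ)+1) + 1) := fun n =>
    Real.Gamma_pos_of_pos (by positivity)
  -- pointwise bound
  have hbnd : ∀ n : ℕ, ∀ t ∈ Set.Icc (0:ℝ) T,
      lam ^ (n+1) * v (n+1) t ≤ (C₁ * β / C₂) *
        (lam * C₂ * Real.Gamma β * t ^ β) ^ (n+1) / Real.Gamma (β * ((n:ℝ)+1) + 1) := by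
    intro n t ht
    have h := (hMB n t ht).2
    have h2 : lam ^ (n+1) * v (n+1) t ≤ lam ^ (n+1) *
        ((C₁ * β / C₂) * (C₂ * Real.Gamma β) ^ (n+1) /
          Real.Gamma (β * ((n:ℝ)+1) + 1) * t ^ (β * ((n:ℝ)+1))) :=
      mul_le_mul_of_nonneg_left h (pow_nonneg hlam.le _)
    have hrp : t ^ (β * ((n:ℝ)+1)) = (t ^ β) ^ (n+1) := by
      rw [show β * ((n:ℝ)+1) = β * (((n+1:ℕ)):ℝ) by push_cast; ring,
        Real.rpow_mul ht.1, Real.rpow_natCast]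
    rw [hrp] at h2
    refine h2.trans_eq ?_
    have hG := (hΓpos n).ne'
    field_simp
    ring
  have hnn : ∀ k : ℕ, ∀ t ∈ Set.Icc (0:ℝ) T, 0 ≤ lam ^ k * v k t := by
    intro k t ht
    cases k with
    | zero => simp [hv0]
    | succ n => exact mul_nonneg (pow_nonneg hlam.le _) (hMB n t ht).1
  have hTβ : (0:ℝ) ≤ T ^ β := Real.rpow_nonneg hT.le β
  -- the majorant
  set ZT : ℝ := lam * C₂ * Real.Gamma β * T ^ β with hZTdef
  have hZT0 : 0 ≤ ZT := by positivity
  have hsumM : ∀ z : ℝ, 0 ≤ z → Summable (fun k : ℕ =>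
      if k = 0 then (1:ℝ) else (C₁ * β / C₂) * z ^ k / Real.Gamma (β * (k:ℝ) + 1)) := by
    intro z hz
    apply (summable_nat_add_iff 1).mp
    apply Summable.congr
      (((ML_summable hβ0 hz).mul_left (C₁ * β / C₂)).comp_injective
        (add_left_injective 1))
    intro n
    simp only [Function.comp, Nat.add_eq, if_neg (Nat.add_one_ne_zero n)]
    push_cast
    rw [mul_div_assoc]
    ring
  have hZle : ∀ t ∈ Set.Icc (0:ℝ) T, lam * C₂ * Real.Gamma β * t ^ β ≤ ZT := by
    intro t ht
    have : t ^ β ≤ T ^ β := Real.rpow_le_rpow ht.1 ht.2 hβ0.le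
    have h0 : 0 ≤ lam * C₂ * Real.Gamma β := by positivity
    calc lam * C₂ * Real.Gamma β * t ^ β ≤ lam * C₂ * Real.Gamma β * T ^ β :=
          mul_le_mul_of_nonneg_left this h0
      _ = ZT := rfl
  refine ⟨⟨fun k => if k = 0 then 1 else (C₁ * β / C₂) * ZT ^ k /
      Real.Gamma (β * (k:ℝ) + 1), hsumM ZT hZT0, ?_⟩, ?_⟩
  · intro k t ht
    cases k with
    | zero => simp [hv0]
    | succ n =>
      rw [abs_of_nonneg (hnn (n+1) t ht)]
      simp only [Nat.add_one_ne_zero n, if_false]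
      refine (hbnd n t ht).trans ?_
      have hzt0 : 0 ≤ lam * C₂ * Real.Gamma β * t ^ β := by
        have := Real.rpow_nonneg ht.1 β
        positivity
      have hpow : (lam * C₂ * Real.Gamma β * t ^ β) ^ (n+1) ≤ ZT ^ (n+1) :=
        pow_le_pow_left₀ hzt0 (hZle t ht) _
      have hcast : β * ((n:ℝ)+1) + 1 = β * (((n+1:ℕ)):ℝ) + 1 := by push_cast; ring
      rw [← hcast]
      exact div_le_div_of_nonneg_right
        (mul_le_mul_of_nonneg_left hpow (by positivity)) (hΓpos n).le |>.trans_eq rfl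
  · intro t ht
    set z : ℝ := lam * C₂ * Real.Gamma β * t ^ β with hzdef
    have hz0 : 0 ≤ z := by
      have := Real.rpow_nonneg ht.1 β
      positivity
    have hML := ML_summable hβ0 hz0 (β := β)
    have hg := hsumM z hz0
    have hle : ∀ k : ℕ, lam ^ k * v k t ≤
        (if k = 0 then (1:ℝ) else (C₁ * β / C₂) * z ^ k / Real.Gamma (β * (k:ℝ) + 1)) := by
      intro k
      cases k with
      | zero => simp [hv0]
      | succ n =>
        rw [if_neg (Nat.add_one_ne_zero n)]
        refine (hbnd n t ht).trans_eq ?_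
        rw [show β * (((n+1:ℕ)):ℝ) + 1 = β * ((n:ℝ)+1) + 1 by push_cast; ring]
    have hasum : Summable (fun k : ℕ => lam ^ k * v k t) :=
      Summable.of_nonneg_of_le (fun k => hnn k t ht) hle hg
    refine (Summable.tsum_le_tsum hle hasum hg).trans_eq ?_
    rw [Summable.tsum_eq_zero_add hg, Summable.tsum_eq_zero_add hML]
    have h1 : ∑' n : ℕ, (if n + 1 = 0 then (1:ℝ) else
        (C₁ * β / C₂) * z ^ (n+1) / Real.Gamma (β * (((n+1:ℕ)):ℝ) + 1))
        = (C₁ * β / C₂) * ∑' n : ℕ, z ^ (n+1) / Real.Gamma (β * (((n+1:ℕ)):ℝ) + 1) := by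
      rw [← tsum_mul_left]
      exact tsum_congr fun n => by
        rw [if_neg (Nat.add_one_ne_zero n), mul_div_assoc]
    rw [if_pos rfl, h1, pow_zero, Nat.cast_zero, mul_zero, zero_add, Real.Gamma_one]
    ring
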